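/- For 0 < q < 1 and positive integer l, ∑_{n=0}^∞ (-1)^n q^{(2n+1)(l+1/2)}/(1 - q^{2n+1}) = -∑_{j=0}^{l-1} q^{j+1/2}/(1 + q^{2j+1}) + ∑_{n=0}^∞ q^{n+1/2}/(1 + q^{2n+1}). -/
import Mathlib

open Real Finset

theorem alternating_q_series_truncation (q : ℝ) (hq0 : 0 < q) (hq1 : q < 1)
    (l : ℕ) (hl : 1 ≤ l) :
    ∑' n : ℕ, (-1 : ℝ) ^ n *
        Real.rpow q ((2 * (n : ℝ) + 1) * ((l : ℝ) + 1 / 2)) / (1 - q ^ (2 * n + 1)) =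
      -(∑ j ∈ Finset.range l, Real.rpow q ((j : ℝ) + 1 / 2) / (1 + q ^ (2 * j + 1))) +
        ∑' n : ℕ, Real.rpow q ((n : ℝ) + 1 / 2) / (1 + q ^ (2 * n + 1)) := by
  have hq0' : (0:ℝ) ≤ q := hq0.le
  have hl1 : (1:ℝ) ≤ (l:ℝ) := by exact_mod_cast hl
  have hodd : ∀ k : ℕ, q ^ (2 * k + 1) < 1 := fun k => pow_lt_one₀ hq0' hq1 (by omega)
  have hoddpos : ∀ k : ℕ, (0:ℝ) < q ^ (2 * k + 1) := fun k => pow_pos hq0 _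
  simp only [Real.rpow_eq_pow]
  set F : ℕ → ℕ → ℝ := fun n m => (-1)^n * q ^ ((2*(n:ℝ)+1) * ((l:ℝ)+1/2+(m:ℝ))) with hFdef
  set g : ℕ → ℝ := fun k => q ^ ((k:ℝ)+1/2) / (1 + q ^ (2*k+1)) with hgdef
  -- summability of the double series
  have hgeo : Summable (fun k : ℕ => q ^ k) := summable_geometric_of_lt_one hq0' hq1
  have haux : ∀ (a b : ℕ), q ^ (((a:ℕ):ℝ)*(b:ℝ)) = (q^a)^b := fun a b => by
    rw [Real.rpow_mul hq0', Real.rpow_natCast q a, Real.rpow_natCast (q^a) b]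
  have hS : Summable (Function.uncurry F) := by
    rw [← summable_abs_iff]
    refine Summable.of_nonneg_of_le (f := fun p : ℕ × ℕ => q ^ p.1 * q ^ p.2)
      (fun p => abs_nonneg _) ?_
      (hgeo.mul_of_nonneg hgeo (fun n => pow_nonneg hq0' n) (fun m => pow_nonneg hq0' m))
    rintro ⟨n, m⟩
    have h1 : |F n m| = q ^ ((2*(n:ℝ)+1) * ((l:ℝ)+1/2+(m:ℝ))) := by
      rw [hFdef]
      rw [abs_mul, abs_pow, abs_neg, abs_one, one_pow, one_mul,
        abs_of_pos (rpow_pos_of_pos hq0 _)]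
    rw [Function.uncurry]
    dsimp only
    rw [h1]
    calc q ^ ((2*(n:ℝ)+1) * ((l:ℝ)+1/2+(m:ℝ)))
        ≤ q ^ ((n:ℝ) + (m:ℝ)) := by
          apply rpow_le_rpow_of_exponent_ge hq0 hq1.le
          nlinarith [Nat.cast_nonneg (α := ℝ) n, Nat.cast_nonneg (α := ℝ) m]
      _ = q ^ n * q ^ m := by
          rw [rpow_add hq0, rpow_natCast, rpow_natCast]
  -- inner sum over m (fiberwise in n): geometric series
  have hA : ∀ n : ℕ, ∑' m : ℕ, F n m
      = (-1)^n * q ^ ((2*(n:ℝ)+1) * ((l:ℝ)+1/2)) / (1 - q ^ (2*n+1)) := by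
    intro n
    have he : ∀ m : ℕ, F n m
        = ((-1)^n * q ^ ((2*(n:ℝ)+1) * ((l:ℝ)+1/2))) * (q ^ (2*n+1))^m := by
      intro m
      rw [hFdef]
      dsimp only
      rw [show (2*(n:ℝ)+1) * ((l:ℝ)+1/2+(m:ℝ))
            = (2*(n:ℝ)+1)*((l:ℝ)+1/2) + (((2*n+1 : ℕ):ℝ))*(m:ℝ) by push_cast; ring,
        rpow_add hq0, haux (2*n+1) m]
      ring
    rw [tsum_congr he, tsum_mul_left,
      tsum_geometric_of_lt_one (pow_nonneg hq0' _) (hodd n)]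
    exact (div_eq_mul_inv _ _).symm
  -- inner sum over n (fiberwise in m): alternating geometric series
  have hB : ∀ m : ℕ, ∑' n : ℕ, F n m = g (m + l) := by
    intro m
    have he : ∀ n : ℕ, F n m
        = (-(q ^ (2*(m+l)+1)))^n * q ^ (((m+l : ℕ):ℝ)+1/2) := by
      intro n
      rw [hFdef]
      dsimp only
      rw [show (2*(n:ℝ)+1) * ((l:ℝ)+1/2+(m:ℝ))
            = (((2*(m+l)+1 : ℕ):ℝ))*(n:ℝ) + ((((m+l : ℕ):ℝ))+1/2) by push_cast; ring,
        rpow_add hq0, haux (2*(m+l)+1) n, neg_pow]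
      ring
    rw [tsum_congr he, tsum_mul_right,
      tsum_geometric_of_norm_lt_one (by
        rw [norm_neg, norm_pow, Real.norm_of_nonneg hq0']
        exact hodd _),
      sub_neg_eq_add]
    exact inv_mul_eq_div _ _
  -- summability of g
  have hgsum : Summable g := by
    refine Summable.of_nonneg_of_le (f := fun k : ℕ => q ^ k * q ^ ((1:ℝ)/2))
      (fun k => div_nonneg (rpow_pos_of_pos hq0 _).le (by positivity)) ?_ (hgeo.mul_right _)
    intro k
    have h1 : g k ≤ q ^ ((k:ℝ)+1/2) := by
        apply div_le_self (rpow_pos_of_pos hq0 _).le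
        nlinarith [hoddpos k]
    calc g k ≤ q ^ ((k:ℝ)+1/2) := h1
      _ = q ^ k * q ^ ((1:ℝ)/2) := by rw [rpow_add hq0, rpow_natCast]
  -- put it together
  have hcomm : ∑' n : ℕ, ∑' m : ℕ, F n m = ∑' m : ℕ, ∑' n : ℕ, F n m :=
    (Summable.tsum_comm hS).symm
  have hshift : ∑ j ∈ Finset.range l, g j + ∑' m : ℕ, g (m + l) = ∑' k : ℕ, g k :=
    Summable.sum_add_tsum_nat_add l hgsum
  calc ∑' n : ℕ, (-1:ℝ)^n * q ^ ((2*(n:ℝ)+1) * ((l:ℝ)+1/2)) / (1 - q ^ (2*n+1))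
      = ∑' n : ℕ, ∑' m : ℕ, F n m := by
        exact (tsum_congr fun n => hA n).symm
    _ = ∑' m : ℕ, ∑' n : ℕ, F n m := hcomm
    _ = ∑' m : ℕ, g (m + l) := tsum_congr hB
    _ = -(∑ j ∈ Finset.range l, g j) + ∑' k : ℕ, g k := by linarith
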